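/- The edge count of the bounded-degree projection is monotone in θ: if θ ≤ θ', then the edge-addition projection at threshold θ outputs at most as many edges as at threshold θ'. -/

import Mathlib

/-- Degree of a vertex in a list of edges. -/
def listDeg {V : Type*} [DecidableEq V] (L : List (V × V)) (u : V) : ℕ :=
  (L.filter (fun e => e.1 = u ∨ e.2 = u)).length

/-- Edge-addition projection. -/
def edgeAddProj {V : Type*} [DecidableEq V] (θ : ℕ) (L : List (V × V)) :
    List (V × V) :=
  L.foldl (fun kept e =>
    if listDeg kept e.1 < θ ∧ listDeg kept e.2 < θ then kept ++ [e] else kept) []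

namespace EdgeAddProjMono

variable {V : Type*} [DecidableEq V]

/-- One step of the edge-addition algorithm. -/
def stepF (θ : ℕ) (kept : List (V × V)) (e : V × V) : List (V × V) :=
  if listDeg kept e.1 < θ ∧ listDeg kept e.2 < θ then kept ++ [e] else kept

lemma edgeAddProj_eq (θ : ℕ) (L : List (V × V)) :
    edgeAddProj θ L = L.foldl (stepF θ) [] := rfl

/-- The potential function. -/
def phi (m u : ℤ) : ℤ := min u (2 * m - u)

lemma listDeg_append_single (K : List (V × V)) (e : V × V) (u : V) :
    listDeg (K ++ [e]) u = listDeg K u + (if e.1 = u ∨ e.2 = u then 1 else 0) := by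
  unfold listDeg
  rw [List.filter_append, List.length_append]
  by_cases h : e.1 = u ∨ e.2 = u <;> simp [h]

lemma listDeg_cons (K : List (V × V)) (e : V × V) (u : V) :
    listDeg (e :: K) u = (if e.1 = u ∨ e.2 = u then 1 else 0) + listDeg K u := by
  unfold listDeg
  rw [List.filter_cons]
  by_cases h : e.1 = u ∨ e.2 = u <;> simp [h] <;> omega

lemma mem_foldl_step (θ : ℕ) :
    ∀ (L A : List (V × V)) (e : V × V), e ∈ L.foldl (stepF θ) A → e ∈ A ∨ e ∈ L := by
  intro L
  induction L with
  | nil => intro A e h; exact Or.inl (by simpa using h)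
  | cons f L ih =>
    intro A e h
    simp only [List.foldl_cons] at h
    rcases ih _ e h with h' | h'
    · unfold stepF at h'
      split at h'
      · rcases List.mem_append.1 h' with h'' | h''
        · exact Or.inl h''
        · right; simp at h''; simp [h'']
      · exact Or.inl h'
    · right; exact List.mem_cons_of_mem _ h'

lemma sum_two_point (S : Finset V) (f g : V → ℤ) (a b : V) (hab : a ≠ b)
    (ha : a ∈ S) (hb : b ∈ S) (hoff : ∀ v ∈ S, v ≠ a → v ≠ b → f v = g v)
    (hδ : 0 ≤ (f a - g a) + (f b - g b)) (hg : 0 ≤ ∑ v ∈ S, g v) :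
    0 ≤ ∑ v ∈ S, f v := by
  have hsub : ({a, b} : Finset V) ⊆ S := by
    intro x hx
    rcases Finset.mem_insert.1 hx with rfl | hx
    · exact ha
    · rw [Finset.mem_singleton.1 hx]; exact hb
  have h1 : ∑ v ∈ ({a, b} : Finset V), (f v - g v) = ∑ v ∈ S, (f v - g v) := by
    refine Finset.sum_subset hsub ?_
    intro x hx hx'
    simp only [Finset.mem_insert, Finset.mem_singleton, not_or] at hx'
    rw [hoff x hx hx'.1 hx'.2]; ring
  have h2 : ∑ v ∈ ({a, b} : Finset V), (f v - g v) = (f a - g a) + (f b - g b) :=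
    Finset.sum_pair hab
  have h3 : ∑ v ∈ S, (f v - g v) = ∑ v ∈ S, f v - ∑ v ∈ S, g v :=
    Finset.sum_sub_distrib f g
  linarith [h1, h2, h3]

lemma listDeg_notMem (K : List (V × V)) (e : V × V) (v : V)
    (h : ¬(e.1 = v ∨ e.2 = v)) : listDeg (K ++ [e]) v = listDeg K v := by
  rw [listDeg_append_single, if_neg h]
  ring

/-- Main invariant preservation along the fold. -/
lemma key (θ θ' : ℕ) (hθ : θ ≤ θ') (S : Finset V) :
    ∀ (L A B : List (V × V)),
      (∀ e ∈ L, e.1 ∈ S ∧ e.2 ∈ S ∧ e.1 ≠ e.2) →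
      0 ≤ ∑ v ∈ S, phi ((θ' : ℤ) - θ) ((listDeg B v : ℤ) - (listDeg A v : ℤ)) →
      0 ≤ ∑ v ∈ S, phi ((θ' : ℤ) - θ)
            ((listDeg (L.foldl (stepF θ') B) v : ℤ) -
              (listDeg (L.foldl (stepF θ) A) v : ℤ)) := by
  intro L
  induction L with
  | nil => intro A B _ h; simpa using h
  | cons e L ih =>
    intro A B hE hinv
    obtain ⟨h1S, h2S, hne⟩ := hE e List.mem_cons_self
    simp only [List.foldl_cons]
    refine ih (stepF θ A e) (stepF θ' B e) (fun f hf => hE f (List.mem_cons_of_mem _ hf)) ?_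
    -- show the invariant is preserved by one step
    set m : ℤ := (θ' : ℤ) - θ with hm
    have hm0 : 0 ≤ m := by simp [hm]; exact_mod_cast hθ
    refine sum_two_point S _ _ e.1 e.2 hne h1S h2S ?_ ?_ hinv
    · -- off the endpoints nothing changes
      intro v _ hv1 hv2
      have hni : ¬(e.1 = v ∨ e.2 = v) := by
        push_neg
        exact ⟨fun h => hv1 h.symm, fun h => hv2 h.symm⟩
      unfold stepF
      split <;> split <;> simp [listDeg_notMem _ _ _ hni]
    · -- the change at the two endpoints is nonnegative
      have hd1A : listDeg (A ++ [e]) e.1 = listDeg A e.1 + 1 := by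
        rw [listDeg_append_single, if_pos (Or.inl rfl)]
      have hd2A : listDeg (A ++ [e]) e.2 = listDeg A e.2 + 1 := by
        rw [listDeg_append_single, if_pos (Or.inr rfl)]
      have hd1B : listDeg (B ++ [e]) e.1 = listDeg B e.1 + 1 := by
        rw [listDeg_append_single, if_pos (Or.inl rfl)]
      have hd2B : listDeg (B ++ [e]) e.2 = listDeg B e.2 + 1 := by
        rw [listDeg_append_single, if_pos (Or.inr rfl)]
      unfold stepF
      by_cases hA : listDeg A e.1 < θ ∧ listDeg A e.2 < θ <;>
        by_cases hB : listDeg B e.1 < θ' ∧ listDeg B e.2 < θ'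
      · -- both accept
        rw [if_pos hA, if_pos hB]
        rw [hd1A, hd2A, hd1B, hd2B]
        have : ∀ x y : ℕ,
            phi m (((x + 1 : ℕ) : ℤ) - ((y + 1 : ℕ) : ℤ)) = phi m ((x : ℤ) - (y : ℤ)) := by
          intro x y; push_cast; ring_nf
        rw [this, this]; simp
      · -- A accepts, B rejects
        rw [if_pos hA, if_neg hB]
        rw [hd1A, hd2A]
        push_neg at hB
        obtain ⟨hA1, hA2⟩ := hA
        unfold phi
        by_cases hb1 : listDeg B e.1 < θ'
        · have hb2 := hB hb1
          have c1 : (listDeg A e.1 : ℤ) < θ := by exact_mod_cast hA1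
          have c2 : (listDeg A e.2 : ℤ) < θ := by exact_mod_cast hA2
          have c3 : (θ' : ℤ) ≤ listDeg B e.2 := by exact_mod_cast hb2
          push_cast
          omega
        · have c1 : (listDeg A e.1 : ℤ) < θ := by exact_mod_cast hA1
          have c2 : (listDeg A e.2 : ℤ) < θ := by exact_mod_cast hA2
          have c3 : (θ' : ℤ) ≤ listDeg B e.1 := by
            have := Nat.le_of_not_lt hb1; exact_mod_cast this
          push_cast
          omega
      · -- A rejects, B accepts
        rw [if_neg hA, if_pos hB]
        rw [hd1B, hd2B]
        push_neg at hA
        obtain ⟨hB1, hB2⟩ := hB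
        unfold phi
        by_cases ha1 : listDeg A e.1 < θ
        · have ha2 := hA ha1
          have c1 : (listDeg B e.1 : ℤ) < θ' := by exact_mod_cast hB1
          have c2 : (listDeg B e.2 : ℤ) < θ' := by exact_mod_cast hB2
          have c3 : (θ : ℤ) ≤ listDeg A e.2 := by exact_mod_cast ha2
          push_cast
          omega
        · have c1 : (listDeg B e.1 : ℤ) < θ' := by exact_mod_cast hB1
          have c2 : (listDeg B e.2 : ℤ) < θ' := by exact_mod_cast hB2
          have c3 : (θ : ℤ) ≤ listDeg A e.1 := by
            have := Nat.le_of_not_lt ha1; exact_mod_cast this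
          push_cast
          omega
      · -- both reject
        rw [if_neg hA, if_neg hB]; simp

/-- Sum of degrees over a superset of the vertex set is twice the edge count. -/
lemma sum_listDeg (S : Finset V) :
    ∀ K : List (V × V), (∀ e ∈ K, e.1 ∈ S ∧ e.2 ∈ S ∧ e.1 ≠ e.2) →
      ∑ v ∈ S, (listDeg K v : ℤ) = 2 * K.length := by
  intro K
  induction K with
  | nil => intro _; simp [listDeg]
  | cons e K ih =>
    intro hE
    obtain ⟨h1, h2, hne⟩ := hE e List.mem_cons_self
    have hrec := ih (fun f hf => hE f (List.mem_cons_of_mem _ hf))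
    have hsplit : ∀ v : V, (listDeg (e :: K) v : ℤ) =
        ((if e.1 = v then 1 else 0) + (if e.2 = v then 1 else 0)) + (listDeg K v : ℤ) := by
      intro v
      rw [listDeg_cons]
      by_cases hv1 : e.1 = v <;> by_cases hv2 : e.2 = v
      · exact absurd (hv1.trans hv2.symm) hne
      · simp [hv1, hv2]
      · simp [hv1, hv2]
      · simp [hv1, hv2]
    calc ∑ v ∈ S, (listDeg (e :: K) v : ℤ)
        = ∑ v ∈ S, (((if e.1 = v then 1 else 0) + (if e.2 = v then 1 else 0))
            + (listDeg K v : ℤ)) := by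
          exact Finset.sum_congr rfl fun v _ => hsplit v
      _ = (∑ v ∈ S, ((if e.1 = v then (1 : ℤ) else 0) + (if e.2 = v then 1 else 0)))
            + ∑ v ∈ S, (listDeg K v : ℤ) := Finset.sum_add_distrib
      _ = 2 * (e :: K).length := by
          rw [Finset.sum_add_distrib, Finset.sum_ite_eq, Finset.sum_ite_eq,
            if_pos h1, if_pos h2, hrec]
          simp [List.length_cons]; ring

end EdgeAddProjMono

/-- The kept edge count of the bounded-degree projection is monotone in `θ`. -/
theorem edgeAddProj_mono {V : Type*} [DecidableEq V]
    (θ θ' : ℕ) (L : List (V × V)) (hθ : θ ≤ θ')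
    (hsimple : ∀ e ∈ L, e.1 ≠ e.2) (hnodup : L.Nodup)
    (hsym : ∀ e ∈ L, (e.2, e.1) ∉ L) :
    (edgeAddProj θ L).length ≤ (edgeAddProj θ' L).length := by
  classical
  open EdgeAddProjMono in
  set S : Finset V := (L.map Prod.fst ++ L.map Prod.snd).toFinset with hSdef
  have hS : ∀ e ∈ L, e.1 ∈ S ∧ e.2 ∈ S ∧ e.1 ≠ e.2 := by
    intro e he
    refine ⟨?_, ?_, hsimple e he⟩
    · simp only [hSdef, List.toFinset_append, Finset.mem_union, List.mem_toFinset, List.mem_map]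
      left; exact ⟨e, he, rfl⟩
    · simp only [hSdef, List.toFinset_append, Finset.mem_union, List.mem_toFinset, List.mem_map]
      right; exact ⟨e, he, rfl⟩
  set m : ℤ := (θ' : ℤ) - θ with hm
  have hm0 : 0 ≤ m := by simp [hm]; exact_mod_cast hθ
  have hinv0 : 0 ≤ ∑ v ∈ S, EdgeAddProjMono.phi m
      ((listDeg ([] : List (V × V)) v : ℤ) - (listDeg ([] : List (V × V)) v : ℤ)) := by
    have : ∀ v ∈ S, EdgeAddProjMono.phi m
        ((listDeg ([] : List (V × V)) v : ℤ) - (listDeg ([] : List (V × V)) v : ℤ)) = 0 := by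
      intro v _
      simp [EdgeAddProjMono.phi, listDeg]
      omega
    rw [Finset.sum_congr rfl this]
    simp
  have hinv := EdgeAddProjMono.key θ θ' hθ S L [] [] hS hinv0
  rw [← EdgeAddProjMono.edgeAddProj_eq, ← EdgeAddProjMono.edgeAddProj_eq] at hinv
  have hPA : ∀ e ∈ edgeAddProj θ L, e.1 ∈ S ∧ e.2 ∈ S ∧ e.1 ≠ e.2 := by
    intro e he
    rw [EdgeAddProjMono.edgeAddProj_eq] at he
    rcases EdgeAddProjMono.mem_foldl_step θ L [] e he with h | h
    · simp at h
    · exact hS e h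
  have hPB : ∀ e ∈ edgeAddProj θ' L, e.1 ∈ S ∧ e.2 ∈ S ∧ e.1 ≠ e.2 := by
    intro e he
    rw [EdgeAddProjMono.edgeAddProj_eq] at he
    rcases EdgeAddProjMono.mem_foldl_step θ' L [] e he with h | h
    · simp at h
    · exact hS e h
  have hsumA := EdgeAddProjMono.sum_listDeg S (edgeAddProj θ L) hPA
  have hsumB := EdgeAddProjMono.sum_listDeg S (edgeAddProj θ' L) hPB
  have hle : (∑ v ∈ S, EdgeAddProjMono.phi m
        ((listDeg (edgeAddProj θ' L) v : ℤ) - (listDeg (edgeAddProj θ L) v : ℤ)))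
      ≤ ∑ v ∈ S, ((listDeg (edgeAddProj θ' L) v : ℤ) - (listDeg (edgeAddProj θ L) v : ℤ)) := by
    refine Finset.sum_le_sum ?_
    intro v _
    exact min_le_left _ _
  have hsplit : ∑ v ∈ S, ((listDeg (edgeAddProj θ' L) v : ℤ) - (listDeg (edgeAddProj θ L) v : ℤ))
      = 2 * (edgeAddProj θ' L).length - 2 * (edgeAddProj θ L).length := by
    rw [Finset.sum_sub_distrib, hsumA, hsumB]
  have : (0 : ℤ) ≤ 2 * (edgeAddProj θ' L).length - 2 * (edgeAddProj θ L).length := by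
    calc (0 : ℤ) ≤ _ := hinv
      _ ≤ _ := hle
      _ = _ := hsplit
  have h2 : (2 : ℤ) * (edgeAddProj θ L).length ≤ 2 * (edgeAddProj θ' L).length := by linarith
  exact_mod_cast Nat.le_of_mul_le_mul_left (by exact_mod_cast h2) (by norm_num)
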